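/- Define f : ℕ → ℕ by f(0) = 2, f(1) = 4, and f(m) = 3f(m−1) + 2f(m−2) for all m ≥ 2. Then for every m ≥ 1, f(m) equals the cardinality of the NP-LOCO code NPC(m). -/
import Mathlib


/-- The NP-LOCO code: words of length `m` over the alphabet `{0,1,2,3}`
(position `m-1` most significant) containing no contiguous subword `u 3 v` with
`u, v ∈ {0,1}` and no contiguous subword `u 0 v` with `u, v ∈ {2,3}`. -/
def NPC (m : ℕ) : Set (Fin m → Fin 4) :=
  {c | ∀ i : ℕ, ∀ h : i + 2 < m,
      ¬((c ⟨i + 2, h⟩ ∈ ({0, 1} : Set (Fin 4)) ∧ c ⟨i + 1, by omega⟩ = 3 ∧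
            c ⟨i, by omega⟩ ∈ ({0, 1} : Set (Fin 4))) ∨
        (c ⟨i + 2, h⟩ ∈ ({2, 3} : Set (Fin 4)) ∧ c ⟨i + 1, by omega⟩ = 0 ∧
            c ⟨i, by omega⟩ ∈ ({2, 3} : Set (Fin 4))))}

namespace NPCaux

abbrev W (m : ℕ) := Fin m → Fin 4

def IsL (x : Fin 4) : Prop := x = 0 ∨ x = 1
def IsH (x : Fin 4) : Prop := x = 2 ∨ x = 3

instance : DecidablePred IsL := fun x => inferInstanceAs (Decidable (_ ∨ _))
instance : DecidablePred IsH := fun x => inferInstanceAs (Decidable (_ ∨ _))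

def Forb (a b x : Fin 4) : Prop := (IsL x ∧ b = 3 ∧ IsL a) ∨ (IsH x ∧ b = 0 ∧ IsH a)

instance : Decidable (Forb a b x) := inferInstanceAs (Decidable (_ ∨ _))

def Valid (m : ℕ) (c : W m) : Prop :=
  ∀ i : ℕ, ∀ h : i + 2 < m,
    ¬ Forb (c ⟨i, by omega⟩) (c ⟨i + 1, by omega⟩) (c ⟨i + 2, h⟩)

instance (m : ℕ) : DecidablePred (Valid m) := fun c =>
  decidable_of_iff
    (∀ i : ℕ, i < m → ∀ h : i + 2 < m,
      ¬ Forb (c ⟨i, by omega⟩) (c ⟨i + 1, by omega⟩) (c ⟨i + 2, h⟩))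
    (by
      constructor
      · intro H i h; exact H i (by omega) h
      · intro H i _ h; exact H i h)

lemma mem_NPC_iff {m : ℕ} (c : W m) : c ∈ NPC m ↔ Valid m c := by
  unfold NPC Valid Forb IsL IsH
  simp only [Set.mem_setOf_eq, Set.mem_insert_iff, Set.mem_singleton_iff]

def NF (m : ℕ) : Finset (W m) := Finset.univ.filter (Valid m)

def Bad (m : ℕ) (c : W (m + 2)) : Prop :=
  (c ⟨m + 1, by omega⟩ = 3 ∧ IsL (c ⟨m, by omega⟩)) ∨
  (c ⟨m + 1, by omega⟩ = 0 ∧ IsH (c ⟨m, by omega⟩))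

instance (m : ℕ) : DecidablePred (Bad m) := fun c => inferInstanceAs (Decidable (_ ∨ _))

def BF (m : ℕ) : Finset (W (m + 2)) := (NF (m + 2)).filter (Bad m)

lemma NPC_eq_NF (m : ℕ) : NPC m = ↑(NF m) := by
  ext c
  simp [NF, mem_NPC_iff]

lemma ncard_eq (m : ℕ) : (NPC m).ncard = (NF m).card := by
  rw [NPC_eq_NF, Set.ncard_coe_finset]

def Init {m : ℕ} (c : W (m + 1)) : W m := fun i => c i.castSucc

lemma init_snoc {m : ℕ} (w : W m) (x : Fin 4) : Init (Fin.snoc w x : W (m + 1)) = w := by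
  funext i; simp [Init]

lemma snoc_init {m : ℕ} (c : W (m + 1)) : Fin.snoc (Init c) (c (Fin.last m)) = c :=
  Fin.snoc_init_self c

lemma snoc_lt {m : ℕ} (w : W m) (x : Fin 4) (i : ℕ) (h : i < m + 1) (hi : i < m) :
    (Fin.snoc w x : W (m + 1)) ⟨i, h⟩ = w ⟨i, hi⟩ := by
  simp [Fin.snoc, hi]

lemma snoc_last' {m : ℕ} (w : W m) (x : Fin 4) (h : m < m + 1) :
    (Fin.snoc w x : W (m + 1)) ⟨m, h⟩ = x := by
  simp [Fin.snoc]

lemma valid_succ_iff (m : ℕ) (c : W (m + 3)) :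
    Valid (m + 3) c ↔ Valid (m + 2) (Init c) ∧
      ¬ Forb (c ⟨m, by omega⟩) (c ⟨m + 1, by omega⟩) (c ⟨m + 2, by omega⟩) := by
  constructor
  · intro H
    exact ⟨fun i h => H i (by omega), H m (by omega)⟩
  · rintro ⟨H1, H2⟩ i h
    by_cases hi : i + 2 < m + 2
    · exact H1 i hi
    · have hiE : i = m := by omega
      subst hiE
      exact H2

lemma card_allowed : ∀ a b : Fin 4,
    (Finset.univ.filter fun x => ¬ Forb a b x).card =
      if (b = 3 ∧ IsL a) ∨ (b = 0 ∧ IsH a) then 2 else 4 := by decide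

lemma fiber_card (m : ℕ) (w : W (m + 2)) (hw : Valid (m + 2) w) :
    ((NF (m + 3)).filter (fun c => Init c = w)).card =
      (Finset.univ.filter fun x => ¬ Forb (w ⟨m, by omega⟩) (w ⟨m + 1, by omega⟩) x).card := by
  refine Finset.card_bij' (fun c _ => c (Fin.last (m + 2)))
    (fun x _ => Fin.snoc w x) ?_ ?_ ?_ ?_
  · intro c hc
    simp only [NF, Finset.mem_filter, Finset.mem_univ, true_and] at hc ⊢
    obtain ⟨hv, hic⟩ := hc
    have := ((valid_succ_iff m c).1 hv).2
    subst hic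
    exact this
  · intro x hx
    simp only [NF, Finset.mem_filter, Finset.mem_univ, true_and] at hx ⊢
    constructor
    · rw [valid_succ_iff]
      refine ⟨by rw [init_snoc]; exact hw, ?_⟩
      rw [snoc_lt w x m (by omega) (by omega), snoc_lt w x (m + 1) (by omega) (by omega),
        snoc_last' w x (by omega)]
      exact hx
    · exact init_snoc w x
  · intro c hc
    simp only [NF, Finset.mem_filter] at hc
    obtain ⟨-, hic⟩ := hc
    subst hic
    exact snoc_init c
  · intro x hx
    exact snoc_last' w x (by omega)

lemma bad_iff (m : ℕ) (c : W (m + 2)) : Bad m c ↔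
    (c ⟨m + 1, by omega⟩ = 3 ∧ IsL (c ⟨m, by omega⟩)) ∨
    (c ⟨m + 1, by omega⟩ = 0 ∧ IsH (c ⟨m, by omega⟩)) := Iff.rfl

lemma NF_card_congr {a b : ℕ} (h : a = b) : (NF a).card = (NF b).card := by subst h; rfl

lemma key1 : ∀ a b t : Fin 4, ¬ Forb a b t → ((t = 3 ∧ IsL b) ∨ (t = 0 ∧ IsH b)) →
    ¬ ((b = 3 ∧ IsL a) ∨ (b = 0 ∧ IsH a)) := by decide

lemma key2 : ∀ a b : Fin 4, ¬ ((b = 3 ∧ IsL a) ∨ (b = 0 ∧ IsH a)) →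
    (¬ Forb a b (if IsL b then 3 else 0)) ∧
    (((if IsL b then (3 : Fin 4) else 0) = 3 ∧ IsL b) ∨
      ((if IsL b then (3 : Fin 4) else 0) = 0 ∧ IsH b)) := by decide

lemma key3 : ∀ b t : Fin 4, ((t = 3 ∧ IsL b) ∨ (t = 0 ∧ IsH b)) →
    (if IsL b then (3 : Fin 4) else 0) = t := by decide

lemma eq1 (m : ℕ) : (NF (m + 3)).card + 2 * (BF m).card = 4 * (NF (m + 2)).card := by
  have hmap : ∀ c ∈ NF (m + 3), Init c ∈ NF (m + 2) := by
    intro c hc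
    simp only [NF, Finset.mem_filter, Finset.mem_univ, true_and] at hc ⊢
    exact ((valid_succ_iff m c).1 hc).1
  have h0 := Finset.card_eq_sum_card_fiberwise hmap
  have h1 : ∀ w ∈ NF (m + 2),
      ((NF (m + 3)).filter (fun c => Init c = w)).card = if Bad m w then 2 else 4 := by
    intro w hw
    simp only [NF, Finset.mem_filter, Finset.mem_univ, true_and] at hw
    rw [fiber_card m w hw, card_allowed]
    rfl
  rw [Finset.sum_congr rfl h1] at h0
  have hB : 2 * (BF m).card = ∑ w ∈ NF (m + 2), (if Bad m w then 2 else 0) := by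
    rw [← Finset.sum_filter]
    show 2 * (BF m).card = ∑ _w ∈ BF m, 2
    rw [Finset.sum_const, smul_eq_mul, mul_comm]
  rw [h0, hB, ← Finset.sum_add_distrib]
  have hA : ∀ w ∈ NF (m + 2),
      ((if Bad m w then 2 else 4) + (if Bad m w then 2 else 0)) = 4 := by
    intro w _
    by_cases h : Bad m w <;> simp [h]
  rw [Finset.sum_congr rfl hA, Finset.sum_const, smul_eq_mul, mul_comm]

lemma eq2 (m : ℕ) : (BF (m + 1)).card + (BF m).card = (NF (m + 2)).card := by
  have key : (BF (m + 1)).card = ((NF (m + 2)).filter (fun w => ¬ Bad m w)).card := by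
    refine Finset.card_bij' (fun c _ => Init c)
      (fun w _ => Fin.snoc w (if IsL (w ⟨m + 1, by omega⟩) then 3 else 0)) ?_ ?_ ?_ ?_
    · intro c hc
      simp only [BF, NF, Finset.mem_filter, Finset.mem_univ, true_and] at hc ⊢
      obtain ⟨hv, hbad⟩ := hc
      refine ⟨((valid_succ_iff m c).1 hv).1, ?_⟩
      exact key1 _ _ _ ((valid_succ_iff m c).1 hv).2 hbad
    · intro w hw
      simp only [BF, NF, Finset.mem_filter, Finset.mem_univ, true_and] at hw ⊢
      obtain ⟨hv, hnb⟩ := hw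
      obtain ⟨hk1, hk2⟩ := key2 (w ⟨m, by omega⟩) (w ⟨m + 1, by omega⟩) hnb
      set x : Fin 4 := if IsL (w ⟨m + 1, by omega⟩) then (3 : Fin 4) else 0 with hx
      constructor
      · rw [valid_succ_iff]
        refine ⟨by rw [init_snoc]; exact hv, ?_⟩
        rw [snoc_lt w x m (by omega) (by omega), snoc_lt w x (m + 1) (by omega) (by omega),
          snoc_last' w x (by omega)]
        exact hk1
      · rw [bad_iff (m + 1) (Fin.snoc w x), snoc_lt w x (m + 1) (by omega) (by omega),
          snoc_last' w x (by omega)]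
        exact hk2
    · intro c hc
      simp only [BF, NF, Finset.mem_filter, Finset.mem_univ, true_and] at hc
      obtain ⟨-, hbad⟩ := hc
      show Fin.snoc (Init c) (if IsL (c ⟨m + 1, by omega⟩) then (3 : Fin 4) else 0) = c
      rw [key3 (c ⟨m + 1, by omega⟩) (c (Fin.last (m + 2))) hbad]
      exact snoc_init c
    · intro w _
      exact init_snoc w _
  have h2 := Finset.card_filter_add_card_filter_not (s := NF (m + 2)) (p := Bad m)
  have h3 : (BF m).card = ((NF (m + 2)).filter (Bad m)).card := rfl
  omega

lemma NF1 : (NF 1).card = 4 := by decide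
lemma NF2 : (NF 2).card = 16 := by decide
lemma BF0 : (BF 0).card = 4 := by decide

end NPCaux

theorem stmt17 (f : ℕ → ℕ) (hf0 : f 0 = 2) (hf1 : f 1 = 4)
    (hrec : ∀ m : ℕ, 2 ≤ m → f m = 3 * f (m - 1) + 2 * f (m - 2)) :
    ∀ m : ℕ, 1 ≤ m → (NPC m).ncard = f m := by
  suffices H : ∀ k : ℕ, (NPCaux.NF (k + 1)).card = f (k + 1) by
    intro m hm
    obtain ⟨k, rfl⟩ : ∃ k, m = k + 1 := ⟨m - 1, by omega⟩
    rw [NPCaux.ncard_eq]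
    exact H k
  intro k
  induction k using Nat.strong_induction_on with
  | _ k ih =>
    match k, ih with
    | 0, _ => rw [NPCaux.NF1, hf1]
    | 1, _ =>
      have h2 := hrec 2 (by omega)
      norm_num at h2
      show (NPCaux.NF 2).card = f 2
      rw [NPCaux.NF2]
      omega
    | 2, _ =>
      have h1 := NPCaux.eq1 0
      have h3 := hrec 3 (by omega)
      have h2 := hrec 2 (by omega)
      norm_num at h3 h2
      rw [NPCaux.NF_card_congr (show (0:ℕ) + 3 = 3 from rfl), NPCaux.NF_card_congr (show (0:ℕ) + 2 = 2 from rfl), NPCaux.NF2, NPCaux.BF0] at h1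
      show (NPCaux.NF 3).card = f 3
      omega
    | (j + 3), ih =>
      have e1 := NPCaux.eq1 (j + 1)
      rw [NPCaux.NF_card_congr (show j + 1 + 3 = j + 4 from by omega),
        NPCaux.NF_card_congr (show j + 1 + 2 = j + 3 from by omega)] at e1
      have e2 := NPCaux.eq2 j
      have e3 := NPCaux.eq1 j
      have i1 := ih (j + 2) (by omega)
      have i2 := ih (j + 1) (by omega)
      have hr := hrec (j + 4) (by omega)
      have h4 : j + 4 - 1 = j + 3 := by omega
      have h5 : j + 4 - 2 = j + 2 := by omega
      rw [h4, h5] at hr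
      have hkk : j + 3 + 1 = j + 4 := by omega
      rw [hkk]
      have hkk2 : j + 2 + 1 = j + 3 := by omega
      rw [hkk2] at i1
      have hkk3 : j + 1 + 1 = j + 2 := by omega
      rw [hkk3] at i2
      omega
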